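/- The map H_III^B(α,β): (x,y) ↦ (y·Q⁻¹, x·Q) with Q = (αxy+1)/(βxy+1) satisfies the Yang–Baxter relation on all triples where the relevant denominators are nonzero. -/

import Mathlib

open Function

variable {K : Type*} [Field K]

/-- lift a map on pairs to act on coordinates 1,2 of a triple -/
def lift12 {X : Type*} (f : X × X → X × X) : X × X × X → X × X × X :=
  fun p => ((f (p.1, p.2.1)).1, (f (p.1, p.2.1)).2, p.2.2)

/-- lift to coordinates 1,3 -/
def lift13 {X : Type*} (f : X × X → X × X) : X × X × X → X × X × X :=
  fun p => ((f (p.1, p.2.2)).1, p.2.1, (f (p.1, p.2.2)).2)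

/-- lift to coordinates 2,3 -/
def lift23 {X : Type*} (f : X × X → X × X) : X × X × X → X × X × X :=
  fun p => (p.1, (f (p.2.1, p.2.2)).1, (f (p.2.1, p.2.2)).2)

def HIIIBMap (a b : K) : K × K → K × K :=
  fun p => (p.2 * ((b*p.1*p.2 + 1)/(a*p.1*p.2 + 1)), p.1 * ((a*p.1*p.2 + 1)/(b*p.1*p.2 + 1)))

set_option maxHeartbeats 1600000 in
theorem yangBaxter_HIIIB (a1 a2 a3 x y z : K)
    (h1 : (a1*x*y + 1) ≠ 0)
    (h2 : (a2*x*y + 1) ≠ 0)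
    (h3 : (a1*(lift12 (HIIIBMap a1 a2) (x, y, z)).1*(lift12 (HIIIBMap a1 a2) (x, y, z)).2.2 + 1) ≠ 0)
    (h4 : (a3*(lift12 (HIIIBMap a1 a2) (x, y, z)).1*(lift12 (HIIIBMap a1 a2) (x, y, z)).2.2 + 1) ≠ 0)
    (h5 : (a2*(lift13 (HIIIBMap a1 a3) (lift12 (HIIIBMap a1 a2) (x, y, z))).2.1*(lift13 (HIIIBMap a1 a3) (lift12 (HIIIBMap a1 a2) (x, y, z))).2.2 + 1) ≠ 0)
    (h6 : (a3*(lift13 (HIIIBMap a1 a3) (lift12 (HIIIBMap a1 a2) (x, y, z))).2.1*(lift13 (HIIIBMap a1 a3) (lift12 (HIIIBMap a1 a2) (x, y, z))).2.2 + 1) ≠ 0)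
    (h7 : (a2*y*z + 1) ≠ 0)
    (h8 : (a3*y*z + 1) ≠ 0)
    (h9 : (a1*(lift23 (HIIIBMap a2 a3) (x, y, z)).1*(lift23 (HIIIBMap a2 a3) (x, y, z)).2.2 + 1) ≠ 0)
    (h10 : (a3*(lift23 (HIIIBMap a2 a3) (x, y, z)).1*(lift23 (HIIIBMap a2 a3) (x, y, z)).2.2 + 1) ≠ 0)
    (h11 : (a1*(lift13 (HIIIBMap a1 a3) (lift23 (HIIIBMap a2 a3) (x, y, z))).1*(lift13 (HIIIBMap a1 a3) (lift23 (HIIIBMap a2 a3) (x, y, z))).2.1 + 1) ≠ 0)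
    (h12 : (a2*(lift13 (HIIIBMap a1 a3) (lift23 (HIIIBMap a2 a3) (x, y, z))).1*(lift13 (HIIIBMap a1 a3) (lift23 (HIIIBMap a2 a3) (x, y, z))).2.1 + 1) ≠ 0) :
    lift23 (HIIIBMap a2 a3) (lift13 (HIIIBMap a1 a3) (lift12 (HIIIBMap a1 a2) (x, y, z))) =
      lift12 (HIIIBMap a1 a2) (lift13 (HIIIBMap a1 a3) (lift23 (HIIIBMap a2 a3) (x, y, z))) := by
  have hP1 : a1*x*y+1 ≠ 0 := h1
  have hP2 : a2*x*y+1 ≠ 0 := h2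
  have hQ2 : a2*y*z+1 ≠ 0 := h7
  have hQ3 : a3*y*z+1 ≠ 0 := h8
  set C1 : K := a1*y*z*(a2*x*y+1) + (a1*x*y+1) with hC1def
  set C3 : K := a3*y*z*(a2*x*y+1) + (a1*x*y+1) with hC3def
  set E1 : K := a1*x*y*(a2*y*z+1) + (a3*y*z+1) with hE1def
  set E3 : K := a3*x*y*(a2*y*z+1) + (a3*y*z+1) with hE3def
  have eC1 : a1 * (y * ((a2*x*y+1)/(a1*x*y+1))) * z + 1 = C1 / (a1*x*y+1) := by
    rw [hC1def, eq_div_iff hP1]; linear_combination (a1*y*z) * (div_mul_cancel₀ (a2*x*y+1) hP1)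
  have eC3 : a3 * (y * ((a2*x*y+1)/(a1*x*y+1))) * z + 1 = C3 / (a1*x*y+1) := by
    rw [hC3def, eq_div_iff hP1]; linear_combination (a3*y*z) * (div_mul_cancel₀ (a2*x*y+1) hP1)
  have eE1 : a1 * x * (y * ((a2*y*z+1)/(a3*y*z+1))) + 1 = E1 / (a3*y*z+1) := by
    rw [hE1def, eq_div_iff hQ3]; linear_combination (a1*x*y) * (div_mul_cancel₀ (a2*y*z+1) hQ3)
  have eE3 : a3 * x * (y * ((a2*y*z+1)/(a3*y*z+1))) + 1 = E3 / (a3*y*z+1) := by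
    rw [hE3def]; field_simp
  have hC1 : C1 ≠ 0 := by
    intro hc; apply h3
    simp only [lift12, HIIIBMap]
    rw [eC1, hc, zero_div]
  have hC3 : C3 ≠ 0 := by
    intro hc; apply h4
    simp only [lift12, HIIIBMap]
    rw [eC3, hc, zero_div]
  have hE1 : E1 ≠ 0 := by
    intro hc; apply h9
    simp only [lift23, HIIIBMap]
    rw [eE1, hc, zero_div]
  have hE3 : E3 ≠ 0 := by
    intro hc; apply h10
    simp only [lift23, HIIIBMap]
    rw [eE3, hc, zero_div]
  set D2 : K := a2*x*y*C1 + C3 with hD2def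
  set D3 : K := a3*x*y*C1 + C3 with hD3def
  set F1 : K := a1*y*z*E3 + E1 with hF1def
  set F2 : K := a2*y*z*E3 + E1 with hF2def
  have eD2 : a2 * (x * ((a1*x*y+1)/(a2*x*y+1))) *
      (y * ((a2*x*y+1)/(a1*x*y+1)) *
        ((a1 * (y * ((a2*x*y+1)/(a1*x*y+1))) * z + 1) /
          (a3 * (y * ((a2*x*y+1)/(a1*x*y+1))) * z + 1))) + 1 = D2 / C3 := by
    rw [eC1, eC3, hD2def, div_div_div_cancel_right₀ hP1]
    rw [eq_div_iff hC3]
    have hAB : (a1*x*y+1)/(a2*x*y+1)*((a2*x*y+1)/(a1*x*y+1)) = 1 := by rw [div_mul_div_comm, mul_comm (a2*x*y+1) (a1*x*y+1), div_self (mul_ne_zero hP1 hP2)]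
    linear_combination (a2*x*y*(C1/C3*C3)) * hAB + (a2*x*y) * (div_mul_cancel₀ C1 hC3)
  have eD3 : a3 * (x * ((a1*x*y+1)/(a2*x*y+1))) *
      (y * ((a2*x*y+1)/(a1*x*y+1)) *
        ((a1 * (y * ((a2*x*y+1)/(a1*x*y+1))) * z + 1) /
          (a3 * (y * ((a2*x*y+1)/(a1*x*y+1))) * z + 1))) + 1 = D3 / C3 := by
    rw [eC1, eC3, hD3def, div_div_div_cancel_right₀ hP1]
    rw [eq_div_iff hC3]
    have hAB : (a1*x*y+1)/(a2*x*y+1)*((a2*x*y+1)/(a1*x*y+1)) = 1 := by rw [div_mul_div_comm, mul_comm (a2*x*y+1) (a1*x*y+1), div_self (mul_ne_zero hP1 hP2)]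
    linear_combination (a3*x*y*(C1/C3*C3)) * hAB + (a3*x*y) * (div_mul_cancel₀ C1 hC3)
  have eF1 : a1 * (y * ((a2*y*z+1)/(a3*y*z+1)) *
        ((a3 * x * (y * ((a2*y*z+1)/(a3*y*z+1))) + 1) /
          (a1 * x * (y * ((a2*y*z+1)/(a3*y*z+1))) + 1))) *
      (z * ((a3*y*z+1)/(a2*y*z+1))) + 1 = F1 / E1 := by
    rw [eE1, eE3, hF1def, div_div_div_cancel_right₀ hQ3]
    rw [eq_div_iff hE1]
    have hAB : (a2*y*z+1)/(a3*y*z+1)*((a3*y*z+1)/(a2*y*z+1)) = 1 := by rw [div_mul_div_comm, mul_comm (a3*y*z+1) (a2*y*z+1), div_self (mul_ne_zero hQ2 hQ3)]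
    linear_combination (a1*y*z*(E3/E1*E1)) * hAB + (a1*y*z) * (div_mul_cancel₀ E3 hE1)
  have eF2 : a2 * (y * ((a2*y*z+1)/(a3*y*z+1)) *
        ((a3 * x * (y * ((a2*y*z+1)/(a3*y*z+1))) + 1) /
          (a1 * x * (y * ((a2*y*z+1)/(a3*y*z+1))) + 1))) *
      (z * ((a3*y*z+1)/(a2*y*z+1))) + 1 = F2 / E1 := by
    rw [eE1, eE3, hF2def, div_div_div_cancel_right₀ hQ3]
    rw [eq_div_iff hE1]
    have hAB : (a2*y*z+1)/(a3*y*z+1)*((a3*y*z+1)/(a2*y*z+1)) = 1 := by rw [div_mul_div_comm, mul_comm (a3*y*z+1) (a2*y*z+1), div_self (mul_ne_zero hQ2 hQ3)]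
    linear_combination (a2*y*z*(E3/E1*E1)) * hAB + (a2*y*z) * (div_mul_cancel₀ E3 hE1)
  have hD2 : D2 ≠ 0 := by
    intro hc; apply h5
    simp only [lift12, lift13, HIIIBMap]
    rw [eD2, hc, zero_div]
  have hD3 : D3 ≠ 0 := by
    intro hc; apply h6
    simp only [lift12, lift13, HIIIBMap]
    rw [eD3, hc, zero_div]
  have hF1 : F1 ≠ 0 := by
    intro hc; apply h11
    simp only [lift23, lift13, HIIIBMap]
    rw [eF1, hc, zero_div]
  have hF2 : F2 ≠ 0 := by
    intro hc; apply h12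
    simp only [lift23, lift13, HIIIBMap]
    rw [eF2, hc, zero_div]
  have hLHS : lift23 (HIIIBMap a2 a3) (lift13 (HIIIBMap a1 a3) (lift12 (HIIIBMap a1 a2) (x, y, z))) =
      (z * C3 / C1, y * (a2*x*y+1) * C1 * D3 / ((a1*x*y+1) * C3 * D2),
        x * (a1*x*y+1) * D2 / ((a2*x*y+1) * D3)) := by
    simp only [lift12, lift13, lift23, HIIIBMap]
    refine Prod.ext ?_ (Prod.ext ?_ ?_) <;> simp only []
    · rw [eC1, eC3, div_div_div_cancel_right₀ hP1]
      field_simp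
    · rw [eD2, eD3, eC1, eC3, div_div_div_cancel_right₀ hC3, div_div_div_cancel_right₀ hP1]
      field_simp
    · rw [eD2, eD3, div_div_div_cancel_right₀ hC3]
      field_simp
  have hRHS : lift12 (HIIIBMap a1 a2) (lift13 (HIIIBMap a1 a3) (lift23 (HIIIBMap a2 a3) (x, y, z))) =
      (z * (a3*y*z+1) * F2 / ((a2*y*z+1) * F1),
        y * (a2*y*z+1) * E3 * F1 / ((a3*y*z+1) * E1 * F2),
        x * E1 / E3) := by
    simp only [lift12, lift13, lift23, HIIIBMap]
    refine Prod.ext ?_ (Prod.ext ?_ ?_) <;> simp only []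
    · rw [eF1, eF2, div_div_div_cancel_right₀ hE1]
      field_simp
    · rw [eF1, eF2, eE1, eE3, div_div_div_cancel_right₀ hE1, div_div_div_cancel_right₀ hQ3]
      field_simp
    · rw [eE1, eE3, div_div_div_cancel_right₀ hQ3]
      field_simp
  rw [hLHS, hRHS]
  refine Prod.ext ?_ (Prod.ext ?_ ?_) <;> simp only []
  · rw [div_eq_div_iff hC1 (mul_ne_zero hQ2 hF1)]
    rw [hF1def, hF2def, hC1def, hC3def, hE1def, hE3def]; ring
  · rw [div_eq_div_iff (mul_ne_zero (mul_ne_zero hP1 hC3) hD2)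
      (mul_ne_zero (mul_ne_zero hQ3 hE1) hF2)]
    rw [hD2def, hD3def, hF1def, hF2def, hC1def, hC3def, hE1def, hE3def]; ring
  · rw [div_eq_div_iff (mul_ne_zero hP2 hD3) hE3]
    rw [hD2def, hD3def, hC1def, hC3def, hE1def, hE3def]; ring
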